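/- For every multi-index α ∈ ℕ³ and every t ∈ (0, t₀], the weighted energy E_α(t) := (1/2) ∫_{[0,1]³} [ t² (∂_t∂_x^α ψ)²(t,x) + Σ_{i=1}^{3} t^{2−2pᵢ} (∂_{x_i}∂_x^α ψ)²(t,x) ] dx satisfies E_α(t) ≤ E_α(t₀). -/

import Mathlib

noncomputable section

open MeasureTheory Filter Set

/-- Spatial partial derivative `∂_{x_i}` in the `i`-th coordinate direction. -/
def pd (i : Fin 3) (f : (Fin 3 → ℝ) → ℝ) (x : Fin 3 → ℝ) : ℝ :=
  deriv (fun s => f (Function.update x i s)) (x i)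

/-- Iterated spatial derivative `∂_x^α` for a multi-index `α ∈ ℕ³`. -/
def pdMulti (α : Fin 3 → ℕ) (f : (Fin 3 → ℝ) → ℝ) : (Fin 3 → ℝ) → ℝ :=
  (pd 0)^[α 0] ((pd 1)^[α 1] ((pd 2)^[α 2] f))

/-- Time derivative `∂_t`. -/
def dtd (ψ : ℝ → (Fin 3 → ℝ) → ℝ) : ℝ → (Fin 3 → ℝ) → ℝ :=
  fun t x => deriv (fun s => ψ s x) t

/-- `ℤ³`-periodicity of a function on `ℝ³`. -/
def ZPeriodic (f : (Fin 3 → ℝ) → ℝ) : Prop :=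
  ∀ (x : Fin 3 → ℝ) (k : Fin 3 → ℤ), f (x + fun i => (k i : ℝ)) = f x

/-- Smoothness of `ψ` on `(0,∞) × ℝ³`. -/
def SmoothOnPos (ψ : ℝ → (Fin 3 → ℝ) → ℝ) : Prop :=
  ContDiffOn ℝ (⊤ : ℕ∞) (fun p : ℝ × (Fin 3 → ℝ) => ψ p.1 p.2)
    {p : ℝ × (Fin 3 → ℝ) | 0 < p.1}

/-- The unit cube `[0,1]³`, a fundamental domain for `𝕋³`. -/
def cube : Set (Fin 3 → ℝ) := Set.Icc 0 1

/-- The Kasner wave equation `□_g ψ = 0` in coordinates. -/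
def Kasnerwave (p : Fin 3 → ℝ) (ψ : ℝ → (Fin 3 → ℝ) → ℝ) : Prop :=
  ∀ t : ℝ, 0 < t → ∀ x : Fin 3 → ℝ,
    dtd (dtd ψ) t x + t⁻¹ * dtd ψ t x
      - ∑ j : Fin 3, t ^ (-(2 * p j)) * pd j (pd j (ψ t)) x = 0

/-- The weighted energy `E_α(t)` of a solution on Kasner. -/
def EKasner (p : Fin 3 → ℝ) (ψ : ℝ → (Fin 3 → ℝ) → ℝ) (α : Fin 3 → ℕ) (t : ℝ) : ℝ :=
  (1 / 2) * ∫ x in cube,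
    (t ^ 2 * (dtd (fun s => pdMulti α (ψ s)) t x) ^ 2
      + ∑ i : Fin 3, t ^ (2 - 2 * p i) * (pd i (pdMulti α (ψ t)) x) ^ 2)

open MeasureTheory Filter Set Topology
namespace KE

abbrev X := Fin 3 → ℝ
abbrev M := ℝ × X

def U : Set M := {q | 0 < q.1}

lemma isOpen_U : IsOpen U := isOpen_lt continuous_const continuous_fst

def et : M := (1, 0)
def ex (i : Fin 3) : M := (0, Pi.single i 1)

/-- directional derivative -/
def Dd (w : M) (f : M → ℝ) : M → ℝ := fun q => fderiv ℝ f q w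

lemma one_le_inf : (1 : WithTop ℕ∞) ≤ ((⊤:ℕ∞) : WithTop ℕ∞) := by exact_mod_cast le_top
lemma inf_add_one_le : ((⊤:ℕ∞) : WithTop ℕ∞) + 1 ≤ ((⊤:ℕ∞) : WithTop ℕ∞) := le_of_eq rfl

lemma contDiffAt {f : M → ℝ} (hf : ContDiffOn ℝ (⊤ : ℕ∞) f U) {q : M} (hq : q ∈ U) :
    ContDiffAt ℝ (⊤ : ℕ∞) f q := hf.contDiffAt (isOpen_U.mem_nhds hq)

lemma diffAt {f : M → ℝ} (hf : ContDiffOn ℝ (⊤ : ℕ∞) f U) {q : M} (hq : q ∈ U) :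
    DifferentiableAt ℝ f q := (contDiffAt hf hq).differentiableAt (by simp)

lemma smooth_Dd {f : M → ℝ} (hf : ContDiffOn ℝ (⊤ : ℕ∞) f U) (w : M) :
    ContDiffOn ℝ (⊤ : ℕ∞) (Dd w f) U :=
  (hf.fderiv_of_isOpen isOpen_U inf_add_one_le).clm_apply contDiffOn_const

lemma hasDerivAt_slice_t {f : M → ℝ} {t : ℝ} {x : X} (hf : DifferentiableAt ℝ f (t, x)) :
    HasDerivAt (fun s => f (s, x)) (Dd et f (t, x)) t := by
  have h1 : HasDerivAt (fun s : ℝ => ((s, x) : M)) et t :=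
    (hasDerivAt_id t).prodMk (hasDerivAt_const t x)
  exact hf.hasFDerivAt.comp_hasDerivAt t h1

lemma hasDerivAt_slice_x {f : M → ℝ} {t : ℝ} {x : X} (i : Fin 3)
    (hf : DifferentiableAt ℝ f (t, x)) :
    HasDerivAt (fun s => f (t, Function.update x i s)) (Dd (ex i) f (t, x)) (x i) := by
  have h1 : HasDerivAt (fun s : ℝ => ((t, Function.update x i s) : M)) (ex i) (x i) :=
    (hasDerivAt_const (x i) t).prodMk (hasDerivAt_update x i (x i))
  have hf' : HasFDerivAt f (fderiv ℝ f (t, x)) (t, Function.update x i (x i)) := by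
    rw [Function.update_eq_self]; exact hf.hasFDerivAt
  exact hf'.comp_hasDerivAt (x i) h1

lemma pd_slice {f : M → ℝ} {t : ℝ} {x : X} (i : Fin 3)
    (hf : DifferentiableAt ℝ f (t, x)) :
    pd i (fun y => f (t, y)) x = Dd (ex i) f (t, x) :=
  (hasDerivAt_slice_x i hf).deriv

lemma Dd_comm {f : M → ℝ} (hf : ContDiffOn ℝ (⊤ : ℕ∞) f U) (a b : M) {q : M} (hq : q ∈ U) :
    Dd a (Dd b f) q = Dd b (Dd a f) q := by
  have hev : ∀ᶠ y in 𝓝 q, HasFDerivAt f (fderiv ℝ f y) y := by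
    filter_upwards [isOpen_U.mem_nhds hq] with y hy
    exact (diffAt hf hy).hasFDerivAt
  have hd2 : DifferentiableAt ℝ (fderiv ℝ f) q :=
    (((hf.fderiv_of_isOpen isOpen_U inf_add_one_le).contDiffAt
      (isOpen_U.mem_nhds hq))).differentiableAt (by simp)
  have hsym := second_derivative_symmetric_of_eventually hev hd2.hasFDerivAt
  have key : ∀ c d : M, Dd c (Dd d f) q = fderiv ℝ (fderiv ℝ f) q c d := by
    intro c d
    have : Dd c (Dd d f) q = fderiv ℝ (fun y => fderiv ℝ f y d) q c := rfl
    rw [this, fderiv_clm_apply hd2 (differentiableAt_const d)]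
    simp
  rw [key, key, hsym]

end KE

namespace KE

def tr (k : Fin 3 → ℤ) : M := (0, fun i => (k i : ℝ))

lemma mem_U_add_tr {q : M} (hq : q ∈ U) (k : Fin 3 → ℤ) : q + tr k ∈ U := by
  simpa [U, tr] using hq

lemma Dd_congr_on_U {h1 h2 : M → ℝ} (h : ∀ y ∈ U, h1 y = h2 y) {q : M} (hq : q ∈ U) (w : M) :
    Dd w h1 q = Dd w h2 q := by
  have hev : h1 =ᶠ[𝓝 q] h2 := by
    filter_upwards [isOpen_U.mem_nhds hq] with y hy using h y hy
  unfold Dd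
  rw [hev.fderiv_eq]

lemma Dd_periodic {f : M → ℝ} (hf : ContDiffOn ℝ (⊤ : ℕ∞) f U)
    (hper : ∀ q ∈ U, ∀ k : Fin 3 → ℤ, f (q + tr k) = f q) (w : M) :
    ∀ q ∈ U, ∀ k : Fin 3 → ℤ, Dd w f (q + tr k) = Dd w f q := by
  intro q hq k
  have hd : DifferentiableAt ℝ f (q + tr k) := diffAt hf (mem_U_add_tr hq k)
  have hcomp : HasFDerivAt (fun y : M => f (y + tr k)) (fderiv ℝ f (q + tr k)) q := by
    have h1 : HasFDerivAt (fun y : M => y + tr k) (ContinuousLinearMap.id ℝ M) q :=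
      (hasFDerivAt_id q).add_const (tr k)
    simpa [Function.comp_def] using hd.hasFDerivAt.comp q h1
  have hev : (fun y : M => f (y + tr k)) =ᶠ[𝓝 q] f := by
    filter_upwards [isOpen_U.mem_nhds hq] with y hy using hper y hy k
  have : fderiv ℝ f (q + tr k) = fderiv ℝ f q := by
    rw [← hcomp.fderiv, hev.fderiv_eq]
  unfold Dd
  rw [this]

/-- The key predicate: smooth on `U`, periodic, solves the wave equation. -/
structure Good (p : Fin 3 → ℝ) (f : M → ℝ) : Prop where
  smooth : ContDiffOn ℝ (⊤ : ℕ∞) f U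
  periodic : ∀ q ∈ U, ∀ k : Fin 3 → ℤ, f (q + tr k) = f q
  wave : ∀ q ∈ U, Dd et (Dd et f) q + q.1⁻¹ * Dd et f q
      - ∑ j : Fin 3, q.1 ^ (-(2 * p j)) * Dd (ex j) (Dd (ex j) f) q = 0

lemma hasFDerivAt_fst_inv {q : M} (h : q.1 ≠ 0) :
    HasFDerivAt (fun y : M => y.1⁻¹)
      ((-(q.1 ^ 2)⁻¹) • ContinuousLinearMap.fst ℝ ℝ X) q := by
  have := (hasDerivAt_inv h).comp_hasFDerivAt q (hasFDerivAt_fst (𝕜 := ℝ) (E := ℝ) (F := X) (p := q))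
  refine this.congr_fderiv (ContinuousLinearMap.ext fun v => ?_)
  simp

lemma hasFDerivAt_fst_rpow {q : M} (h : q.1 ≠ 0) (r : ℝ) :
    HasFDerivAt (fun y : M => y.1 ^ r)
      ((r * q.1 ^ (r - 1)) • ContinuousLinearMap.fst ℝ ℝ X) q := by
  simpa [Function.comp_def] using (Real.hasDerivAt_rpow_const (p := r) (Or.inl h)).comp_hasFDerivAt q (hasFDerivAt_fst (𝕜 := ℝ) (E := ℝ) (F := X) (p := q))

lemma good_Dd_ex {p : Fin 3 → ℝ} {f : M → ℝ} (hf : Good p f) (i : Fin 3) :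
    Good p (Dd (ex i) f) := by
  set g := Dd (ex i) f with hg
  have hgs : ContDiffOn ℝ (⊤ : ℕ∞) g U := smooth_Dd hf.smooth _
  refine ⟨hgs, Dd_periodic hf.smooth hf.periodic _, ?_⟩
  intro q hq
  have hne : q.1 ≠ 0 := ne_of_gt hq
  set T := Dd et f with hT
  set A := Dd et T with hA
  set S := fun j : Fin 3 => Dd (ex j) (Dd (ex j) f) with hS
  have hTs : ContDiffOn ℝ (⊤ : ℕ∞) T U := smooth_Dd hf.smooth _
  have hAs : ContDiffOn ℝ (⊤ : ℕ∞) A U := smooth_Dd hTs _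
  have hSs : ∀ j, ContDiffOn ℝ (⊤ : ℕ∞) (S j) U := fun j => smooth_Dd (smooth_Dd hf.smooth _) _
  -- HasFDerivAt for Φ
  have hAd : HasFDerivAt A (fderiv ℝ A q) q := (diffAt hAs hq).hasFDerivAt
  have hTd : HasFDerivAt T (fderiv ℝ T q) q := (diffAt hTs hq).hasFDerivAt
  have hB : HasFDerivAt (fun y : M => y.1⁻¹ * T y)
      ((q.1)⁻¹ • fderiv ℝ T q + T q • ((-(q.1 ^ 2)⁻¹) • ContinuousLinearMap.fst ℝ ℝ X)) q :=
    (hasFDerivAt_fst_inv hne).mul hTd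
  have hCj : ∀ j : Fin 3, HasFDerivAt (fun y : M => y.1 ^ (-(2 * p j)) * S j y)
      ((q.1 ^ (-(2 * p j))) • fderiv ℝ (S j) q
        + S j q • (((-(2 * p j)) * q.1 ^ ((-(2 * p j)) - 1)) • ContinuousLinearMap.fst ℝ ℝ X)) q :=
    fun j => (hasFDerivAt_fst_rpow hne _).mul (diffAt (hSs j) hq).hasFDerivAt
  have hsum : HasFDerivAt (fun y : M => ∑ j : Fin 3, y.1 ^ (-(2 * p j)) * S j y)
      (∑ j : Fin 3, ((q.1 ^ (-(2 * p j))) • fderiv ℝ (S j) q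
        + S j q • (((-(2 * p j)) * q.1 ^ ((-(2 * p j)) - 1)) • ContinuousLinearMap.fst ℝ ℝ X))) q :=
    HasFDerivAt.fun_sum (fun j _ => hCj j)
  have hΦ := ((hAd.add hB).sub hsum)
  have hev : (fun y : M => A y + y.1⁻¹ * T y - ∑ j : Fin 3, y.1 ^ (-(2 * p j)) * S j y)
      =ᶠ[𝓝 q] fun _ => (0 : ℝ) := by
    filter_upwards [isOpen_U.mem_nhds hq] with y hy using hf.wave y hy
  have hzero : fderiv ℝ (fun y : M => A y + y.1⁻¹ * T y
      - ∑ j : Fin 3, y.1 ^ (-(2 * p j)) * S j y) q = 0 := by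
    rw [hev.fderiv_eq]; exact fderiv_const_apply 0
  have happ := congrArg (fun L : M →L[ℝ] ℝ => L (ex i)) (hΦ.fderiv.symm.trans hzero)
  simp only [ContinuousLinearMap.add_apply, ContinuousLinearMap.sub_apply,
    ContinuousLinearMap.smul_apply, ContinuousLinearMap.coe_sum', Finset.sum_apply,
    ContinuousLinearMap.coe_fst', ContinuousLinearMap.zero_apply, smul_eq_mul] at happ
  have hexfst : (ex i).1 = 0 := rfl
  rw [hexfst] at happ
  simp only [mul_zero, zero_mul, add_zero] at happ
  -- happ : fderiv A q (ex i) + q.1⁻¹ * fderiv T q (ex i) - ∑ j, q.1 ^ (-(2*p j)) * fderiv (S j) q (ex i) = 0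
  -- now commute derivatives
  have c1 : Dd (ex i) A q = Dd et (Dd et g) q := by
    rw [hA]
    rw [Dd_comm hTs (ex i) et hq]
    exact Dd_congr_on_U (fun y hy => Dd_comm hf.smooth (ex i) et hy) hq et
  have c2 : Dd (ex i) T q = Dd et g q := Dd_comm hf.smooth (ex i) et hq
  have c3 : ∀ j, Dd (ex i) (S j) q = Dd (ex j) (Dd (ex j) g) q := by
    intro j
    rw [hS]
    rw [Dd_comm (smooth_Dd hf.smooth _) (ex i) (ex j) hq]
    exact Dd_congr_on_U (fun y hy => Dd_comm hf.smooth (ex i) (ex j) hy) hq (ex j)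
  have happ' : Dd (ex i) A q + q.1⁻¹ * Dd (ex i) T q
      - ∑ j : Fin 3, q.1 ^ (-(2 * p j)) * Dd (ex i) (S j) q = 0 := happ
  rw [c1, c2] at happ'
  rw [Finset.sum_congr rfl (fun j _ => by rw [c3 j])] at happ'
  exact happ'

end KE

namespace KE

/-- `Pi.single j` as a continuous linear map `ℝ →L (Fin 3 → ℝ)`. -/
def sgl (j : Fin 3) : ℝ →L[ℝ] X := ContinuousLinearMap.pi (Pi.single j (ContinuousLinearMap.id ℝ ℝ))

lemma sgl_apply (j : Fin 3) (v : ℝ) : sgl j v = Pi.single j v := by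
  funext i
  rcases eq_or_ne i j with rfl | h
  · simp [sgl, ContinuousLinearMap.pi_apply]
  · simp [sgl, ContinuousLinearMap.pi_apply, Pi.single_eq_of_ne h]

lemma insertNth_one_eq (j : Fin 3) (x : Fin 2 → ℝ) :
    (Fin.insertNth j (1 : ℝ) x : Fin 3 → ℝ)
      = (Fin.insertNth j (0 : ℝ) x : Fin 3 → ℝ) + Pi.single j (1 : ℝ) := by
  funext i
  rcases eq_or_ne i j with rfl | h
  · simp
  · obtain ⟨m, rfl⟩ := Fin.exists_succAbove_eq h
    simp [Pi.single_eq_of_ne (Fin.succAbove_ne j m)]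

/-- Integral over the cube of a spatial derivative of a periodic `C¹` function vanishes. -/
lemma integral_deriv_zero (g : X → ℝ) (hg : ContDiff ℝ (⊤ : ℕ∞) g)
    (hper : ∀ (x : X) (k : Fin 3 → ℤ), g (x + fun i => (k i : ℝ)) = g x) (j : Fin 3) :
    ∫ x in cube, fderiv ℝ g x (Pi.single j 1) = 0 := by
  have hgd : Differentiable ℝ g := hg.differentiable (by simp)
  set f : X → X := fun x => Pi.single j (g x) with hfdef
  set f' : X → X →L[ℝ] X := fun x => (sgl j).comp (fderiv ℝ g x) with hf'def
  have hfd : ∀ x : X, HasFDerivAt f (f' x) x := by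
    intro x
    have := ((sgl j).hasFDerivAt (x := g x)).comp x (hgd x).hasFDerivAt
    simpa [hfdef, hf'def, Function.comp, sgl_apply] using this
  have hsingle : ∀ (L : X →L[ℝ] ℝ),
      (∑ i : Fin 3, ((sgl j).comp L) (Pi.single i 1) i) = L (Pi.single j 1) := by
    intro L
    rw [Fintype.sum_eq_single j]
    · simp [sgl_apply]
    · intro i hi
      simp [sgl_apply, Pi.single_eq_of_ne hi]
  have hcont : Continuous fun x => fderiv ℝ g x (Pi.single j 1) :=
    (hg.continuous_fderiv (by simp)).clm_apply continuous_const
  have key := integral_divergence_of_hasFDerivAt_off_countable (n := 2)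
    (a := (0 : X)) (b := (1 : X)) zero_le_one f f' ∅ Set.countable_empty
    (Continuous.continuousOn (by
      exact ((sgl j).continuous.comp (hg.continuous)).congr fun x => by
        simp [hfdef, sgl_apply]))
    (fun x _ => hfd x)
    (by
      apply ContinuousOn.integrableOn_compact isCompact_Icc
      apply Continuous.continuousOn
      have : (fun x => ∑ i : Fin 3, f' x (Pi.single i 1) i)
          = fun x => fderiv ℝ g x (Pi.single j 1) := by
        funext x; simp only [hf'def]; exact hsingle (fderiv ℝ g x)
      rw [this]; exact hcont)
  have hLHS : (∫ x in Icc (0 : X) 1, ∑ i : Fin 3, f' x (Pi.single i 1) i)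
      = ∫ x in cube, fderiv ℝ g x (Pi.single j 1) := by
    apply setIntegral_congr_fun measurableSet_Icc
    intro x _
    simp only [hf'def]; exact hsingle (fderiv ℝ g x)
  rw [hLHS] at key
  rw [key]
  apply Finset.sum_eq_zero
  intro i _
  rcases eq_or_ne i j with rfl | h
  · have hfront : ∀ x : Fin 2 → ℝ, f (Fin.insertNth i ((1 : X) i) x) i
        = f (Fin.insertNth i ((0 : X) i) x) i := by
      intro x
      have h0 : ((1 : X) i) = (1 : ℝ) := rfl
      have h1 : ((0 : X) i) = (0 : ℝ) := rfl
      rw [h0, h1, insertNth_one_eq]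
      have hk : (Pi.single i (1:ℝ)) = fun m => (((Pi.single i (1:ℤ)) : Fin 3 → ℤ) m : ℝ) := by
        funext m
        rcases eq_or_ne m i with rfl | hm
        · simp
        · simp [Pi.single_eq_of_ne hm]
      simp only [hfdef]
      rw [hk, hper]
    rw [sub_eq_zero]
    exact setIntegral_congr_fun measurableSet_Icc (fun x _ => hfront x)
  · have : ∀ y : X, f y i = 0 := fun y => Pi.single_eq_of_ne h _
    simp [this]

end KE

namespace KE

/-- The energy integrand. -/
def F0 (p : Fin 3 → ℝ) (v : M → ℝ) (t : ℝ) (x : X) : ℝ :=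
  t ^ 2 * (Dd et v (t, x)) ^ 2 + ∑ i : Fin 3, t ^ (2 - 2 * p i) * (Dd (ex i) v (t, x)) ^ 2

/-- Its time derivative. -/
def F1 (p : Fin 3 → ℝ) (v : M → ℝ) (t : ℝ) (x : X) : ℝ :=
  2 * t * (Dd et v (t, x)) ^ 2
    + t ^ 2 * (2 * Dd et v (t, x) * Dd et (Dd et v) (t, x))
    + ∑ i : Fin 3, ((2 - 2 * p i) * t ^ (2 - 2 * p i - 1) * (Dd (ex i) v (t, x)) ^ 2
        + t ^ (2 - 2 * p i) * (2 * Dd (ex i) v (t, x) * Dd et (Dd (ex i) v) (t, x)))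

/-- The energy. -/
def en (p : Fin 3 → ℝ) (v : M → ℝ) (t : ℝ) : ℝ := ∫ x in cube, F0 p v t x

lemma cont_slice' {H : M → ℝ} (hH : ContinuousOn H U) {s : ℝ} (hs : 0 < s) :
    Continuous (fun x : X => H (s, x)) := by
  rw [continuous_iff_continuousAt]
  intro x
  have h1 : ContinuousAt H (s, x) :=
    hH.continuousAt (isOpen_U.mem_nhds (by exact hs))
  exact h1.comp ((continuousAt_const).prodMk continuousAt_id)

lemma cont_slice {H : M → ℝ} (hH : ContDiffOn ℝ (⊤ : ℕ∞) H U) {s : ℝ} (hs : 0 < s) :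
    Continuous (fun x : X => H (s, x)) := cont_slice' hH.continuousOn hs

lemma contOn_rpow (c : ℝ) : ContinuousOn (fun q : M => q.1 ^ c) U := by
  intro q hq
  exact ((Real.continuousAt_rpow_const q.1 c (Or.inl (ne_of_gt hq))).comp
    continuousAt_fst).continuousWithinAt

lemma contOn_F1 (p : Fin 3 → ℝ) {v : M → ℝ} (hv : ContDiffOn ℝ (⊤ : ℕ∞) v U) :
    ContinuousOn (fun q : M => F1 p v q.1 q.2) U := by
  have hDt : ContinuousOn (Dd et v) U := (smooth_Dd hv et).continuousOn
  have hDtt : ContinuousOn (Dd et (Dd et v)) U := (smooth_Dd (smooth_Dd hv et) et).continuousOn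
  have hfst : ContinuousOn (fun q : M => q.1) U := continuous_fst.continuousOn
  refine ContinuousOn.add (ContinuousOn.add ?_ ?_) ?_
  · exact ((continuousOn_const.mul hfst).mul (hDt.pow 2))
  · exact (hfst.pow 2).mul ((continuousOn_const.mul hDt).mul hDtt)
  · apply continuousOn_finset_sum
    intro i _
    have hDi : ContinuousOn (Dd (ex i) v) U := (smooth_Dd hv (ex i)).continuousOn
    have hDit : ContinuousOn (Dd et (Dd (ex i) v)) U :=
      (smooth_Dd (smooth_Dd hv (ex i)) et).continuousOn
    exact ((continuousOn_const.mul (contOn_rpow _)).mul (hDi.pow 2)).add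
      ((contOn_rpow _).mul ((continuousOn_const.mul hDi).mul hDit))

lemma measurableSet_cube : MeasurableSet cube := measurableSet_Icc

lemma isCompact_cube : IsCompact cube := isCompact_Icc

lemma cont_F0_slice (p : Fin 3 → ℝ) {v : M → ℝ} (hv : ContDiffOn ℝ (⊤ : ℕ∞) v U) {s : ℝ}
    (hs : 0 < s) : Continuous (fun x : X => F0 p v s x) := by
  unfold F0
  refine Continuous.add ?_ ?_
  · exact continuous_const.mul ((cont_slice (smooth_Dd hv et) hs).pow 2)
  · exact continuous_finset_sum _ fun i _ =>
      continuous_const.mul ((cont_slice (smooth_Dd hv (ex i)) hs).pow 2)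

lemma time_hasDerivAt {H : M → ℝ} (hH : ContDiffOn ℝ (⊤ : ℕ∞) H U) {s : ℝ} (hs : 0 < s) (x : X) :
    HasDerivAt (fun τ => H (τ, x)) (Dd et H (s, x)) s :=
  hasDerivAt_slice_t (diffAt hH (by exact hs))

lemma F_hasDerivAt (p : Fin 3 → ℝ) {v : M → ℝ} (hv : ContDiffOn ℝ (⊤ : ℕ∞) v U) {τ : ℝ}
    (hτ : 0 < τ) (x : X) :
    HasDerivAt (fun σ => F0 p v σ x) (F1 p v τ x) τ := by
  have h1 := time_hasDerivAt (smooth_Dd hv et) hτ x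
  have h2 : ∀ i : Fin 3, HasDerivAt (fun σ => Dd (ex i) v (σ, x))
      (Dd et (Dd (ex i) v) (τ, x)) τ := fun i => time_hasDerivAt (smooth_Dd hv (ex i)) hτ x
  have hrp : ∀ i : Fin 3, HasDerivAt (fun σ : ℝ => σ ^ (2 - 2 * p i))
      ((2 - 2 * p i) * τ ^ (2 - 2 * p i - 1)) τ :=
    fun i => Real.hasDerivAt_rpow_const (Or.inl hτ.ne')
  have hsum : HasDerivAt
      (fun σ : ℝ => ∑ i : Fin 3, σ ^ (2 - 2 * p i) * Dd (ex i) v (σ, x) ^ 2)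
      (∑ i : Fin 3, ((2 - 2 * p i) * τ ^ (2 - 2 * p i - 1) * Dd (ex i) v (τ, x) ^ 2
        + τ ^ (2 - 2 * p i) * (2 * Dd (ex i) v (τ, x) ^ (2 - 1) * Dd et (Dd (ex i) v) (τ, x)))) τ := by
    refine HasDerivAt.fun_sum (fun i _ => ?_)
    have := (hrp i).fun_mul ((h2 i).fun_pow 2)
    exact this.congr_deriv (by push_cast; ring)
  have hmain := ((hasDerivAt_pow 2 τ).fun_mul (h1.fun_pow 2)).fun_add hsum
  exact hmain.congr_deriv (by unfold F1; norm_num)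

lemma en_hasDerivAt (p : Fin 3 → ℝ) {v : M → ℝ} (hv : ContDiffOn ℝ (⊤ : ℕ∞) v U) {s : ℝ}
    (hs : 0 < s) :
    HasDerivAt (en p v) (∫ x in cube, F1 p v s x) s := by
  -- compact set for the bound
  set K : Set M := Icc (s / 2) (2 * s) ×ˢ cube with hK
  have hKc : IsCompact K := isCompact_Icc.prod isCompact_cube
  have hKU : K ⊆ U := by
    rintro ⟨τ, x⟩ ⟨hτ, -⟩
    exact lt_of_lt_of_le (by linarith) hτ.1
  obtain ⟨C, hC⟩ := hKc.exists_bound_of_continuousOn ((contOn_F1 p hv).mono hKU)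
  have hball : ∀ τ ∈ Metric.ball s (s / 2), 0 < τ ∧ τ ∈ Icc (s / 2) (2 * s) := by
    intro τ hτ
    rw [Metric.mem_ball, Real.dist_eq, abs_lt] at hτ
    constructor
    · linarith [hτ.1]
    · constructor <;> [linarith [hτ.1]; linarith [hτ.2]]
  have key := hasDerivAt_integral_of_dominated_loc_of_deriv_le (μ := volume.restrict cube)
    (F := fun τ x => F0 p v τ x) (F' := fun τ x => F1 p v τ x) (x₀ := s)
    (bound := fun _ => C) (Metric.ball_mem_nhds s (half_pos hs))
    (by
      filter_upwards [eventually_gt_nhds hs] with τ hτ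
      exact (cont_F0_slice p hv hτ).aestronglyMeasurable)
    (((cont_F0_slice p hv hs).continuousOn).integrableOn_compact isCompact_cube)
    ((cont_slice' (contOn_F1 p hv) hs).aestronglyMeasurable)
    (by
      filter_upwards [ae_restrict_mem measurableSet_cube] with x hx
      intro τ hτ
      exact hC (τ, x) ⟨(hball τ hτ).2, hx⟩)
    (by
      haveI : IsFiniteMeasure (volume.restrict cube) :=
        ⟨by rw [Measure.restrict_apply_univ]; exact isCompact_cube.measure_lt_top⟩
      exact integrable_const C)
    (by
      filter_upwards with x
      intro τ hτ
      exact F_hasDerivAt p hv (hball τ hτ).1 x)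
  exact key.2

end KE

namespace KE

lemma F1_eq (p : Fin 3 → ℝ) {v : M → ℝ} (hv : Good p v) {s : ℝ} (hs : 0 < s) (x : X) :
    F1 p v s x
      = (∑ j : Fin 3, (2 - 2 * p j) * s ^ (2 - 2 * p j - 1) * (Dd (ex j) v (s, x)) ^ 2)
        + ∑ j : Fin 3, 2 * s ^ (2 - 2 * p j)
            * Dd (ex j) (fun q => Dd et v q * Dd (ex j) v q) (s, x) := by
  have hq : ((s, x) : M) ∈ U := hs
  have hns : s ≠ 0 := hs.ne'
  have hmul : ∀ j : Fin 3, Dd (ex j) (fun q => Dd et v q * Dd (ex j) v q) (s, x)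
      = Dd et v (s, x) * Dd (ex j) (Dd (ex j) v) (s, x)
        + Dd (ex j) v (s, x) * Dd et (Dd (ex j) v) (s, x) := by
    intro j
    have hd1 : DifferentiableAt ℝ (Dd et v) (s, x) := diffAt (smooth_Dd hv.smooth et) hq
    have hd2 : DifferentiableAt ℝ (Dd (ex j) v) (s, x) := diffAt (smooth_Dd hv.smooth (ex j)) hq
    have h0 : Dd (ex j) (fun q => Dd et v q * Dd (ex j) v q) (s, x)
        = fderiv ℝ (fun q => Dd et v q * Dd (ex j) v q) (s, x) (ex j) := rfl
    rw [h0, fderiv_fun_mul hd1 hd2]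
    have hc : Dd (ex j) (Dd et v) (s, x) = Dd et (Dd (ex j) v) (s, x) :=
      Dd_comm hv.smooth (ex j) et hq
    simp only [ContinuousLinearMap.add_apply, ContinuousLinearMap.smul_apply, smul_eq_mul]
    have h1 : fderiv ℝ (Dd (ex j) v) (s, x) (ex j) = Dd (ex j) (Dd (ex j) v) (s, x) := rfl
    have h2 : fderiv ℝ (Dd et v) (s, x) (ex j) = Dd (ex j) (Dd et v) (s, x) := rfl
    rw [h1, h2, hc]
  have hwave := hv.wave (s, x) hq
  have hatt : Dd et (Dd et v) (s, x)
      = (∑ j : Fin 3, s ^ (-(2 * p j)) * Dd (ex j) (Dd (ex j) v) (s, x))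
        - s⁻¹ * Dd et v (s, x) := by
    have : (s, x).1 = s := rfl
    rw [this] at hwave
    linear_combination hwave
  have hsplit : ∀ j : Fin 3, s ^ (2 - 2 * p j) = s ^ 2 * s ^ (-(2 * p j)) := by
    intro j
    rw [show (2 - 2 * p j : ℝ) = ((2 : ℕ) : ℝ) + (-(2 * p j)) by push_cast; ring,
      Real.rpow_add hs, Real.rpow_natCast]
  unfold F1
  simp only [Fin.sum_univ_three, hmul, hatt, hsplit]
  field_simp
  ring

lemma contDiff_slice {H : M → ℝ} (hH : ContDiffOn ℝ (⊤ : ℕ∞) H U) {s : ℝ} (hs : 0 < s) :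
    ContDiff ℝ (⊤ : ℕ∞) (fun y : X => H (s, y)) := by
  rw [contDiff_iff_contDiffAt]
  intro x
  exact (contDiffAt hH (by exact hs)).comp x (contDiffAt_const.prodMk contDiffAt_id)

lemma Dd_ex_slice {H : M → ℝ} (hH : ContDiffOn ℝ (⊤ : ℕ∞) H U) {s : ℝ} (hs : 0 < s)
    (x : X) (j : Fin 3) :
    fderiv ℝ (fun y : X => H (s, y)) x (Pi.single j 1) = Dd (ex j) H (s, x) := by
  have h1 : HasFDerivAt (fun y : X => H (s, y))
      ((fderiv ℝ H (s, x)).comp (((0 : X →L[ℝ] ℝ)).prod (ContinuousLinearMap.id ℝ X))) x :=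
    (diffAt hH (by exact hs)).hasFDerivAt.comp x ((hasFDerivAt_const s x).prodMk (hasFDerivAt_id x))
  rw [h1.fderiv]
  show fderiv ℝ H (s, x) ((0 : X →L[ℝ] ℝ) (Pi.single j 1), Pi.single j 1) = Dd (ex j) H (s, x)
  rw [ContinuousLinearMap.zero_apply]
  rfl

lemma integral_Dd_ex_slice_zero {H : M → ℝ} (hH : ContDiffOn ℝ (⊤ : ℕ∞) H U)
    (hper : ∀ q ∈ U, ∀ k : Fin 3 → ℤ, H (q + tr k) = H q) {s : ℝ} (hs : 0 < s) (j : Fin 3) :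
    ∫ x in cube, Dd (ex j) H (s, x) = 0 := by
  set g : X → ℝ := fun y => H (s, y) with hgdef
  have hg : ContDiff ℝ (⊤ : ℕ∞) g := contDiff_slice hH hs
  have hgper : ∀ (x : X) (k : Fin 3 → ℤ), g (x + fun i => (k i : ℝ)) = g x := by
    intro x k
    show H (s, x + fun i => (k i : ℝ)) = H (s, x)
    have heq : ((s, x + fun i => (k i : ℝ)) : M) = (s, x) + tr k := by
      simp [tr, Prod.ext_iff]
    rw [heq, hper (s, x) (by exact hs) k]
  have h0 := integral_deriv_zero g hg hgper j
  rw [← h0]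
  exact setIntegral_congr_fun measurableSet_cube (fun x _ => (Dd_ex_slice hH hs x j).symm)

lemma en'_eq (p : Fin 3 → ℝ) {v : M → ℝ} (hv : Good p v) {s : ℝ} (hs : 0 < s) :
    (∫ x in cube, F1 p v s x)
      = ∑ j : Fin 3, (2 - 2 * p j) * s ^ (2 - 2 * p j - 1)
          * ∫ x in cube, (Dd (ex j) v (s, x)) ^ 2 := by
  have hHs : ∀ j : Fin 3, ContDiffOn ℝ (⊤ : ℕ∞) (fun q => Dd et v q * Dd (ex j) v q) U :=
    fun j => (smooth_Dd hv.smooth et).mul (smooth_Dd hv.smooth (ex j))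
  have hHper : ∀ j : Fin 3, ∀ q ∈ U, ∀ k : Fin 3 → ℤ,
      (Dd et v (q + tr k)) * (Dd (ex j) v (q + tr k)) = Dd et v q * Dd (ex j) v q := by
    intro j q hq k
    rw [Dd_periodic hv.smooth hv.periodic et q hq k,
      Dd_periodic hv.smooth hv.periodic (ex j) q hq k]
  have intb : ∀ j : Fin 3, IntegrableOn (fun x => (Dd (ex j) v (s, x)) ^ 2) cube := fun j =>
    (((cont_slice (smooth_Dd hv.smooth (ex j)) hs).pow 2).continuousOn).integrableOn_compact
      isCompact_cube
  have inta : ∀ j : Fin 3, IntegrableOn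
      (fun x => (2 - 2 * p j) * s ^ (2 - 2 * p j - 1) * (Dd (ex j) v (s, x)) ^ 2) cube :=
    fun j => ((intb j).const_mul _)
  have intB : ∀ j : Fin 3, IntegrableOn
      (fun x => 2 * s ^ (2 - 2 * p j)
        * Dd (ex j) (fun q => Dd et v q * Dd (ex j) v q) (s, x)) cube := fun j =>
    (((cont_slice (smooth_Dd (hHs j) (ex j)) hs).continuousOn).integrableOn_compact
      isCompact_cube).const_mul _
  rw [setIntegral_congr_fun measurableSet_cube (fun x _ => F1_eq p hv hs x)]
  rw [integral_add (integrable_finset_sum _ (fun j _ => inta j))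
    (integrable_finset_sum _ (fun j _ => intB j))]
  rw [integral_finset_sum _ (fun j _ => inta j), integral_finset_sum _ (fun j _ => intB j)]
  have hzero : ∀ j : Fin 3, (∫ x in cube, 2 * s ^ (2 - 2 * p j)
      * Dd (ex j) (fun q => Dd et v q * Dd (ex j) v q) (s, x)) = 0 := by
    intro j
    rw [integral_const_mul,
      integral_Dd_ex_slice_zero (hHs j) (hHper j) hs j, mul_zero]
  rw [Finset.sum_congr rfl (fun j _ => hzero j)]
  simp only [Finset.sum_const_zero, add_zero]
  exact Finset.sum_congr rfl (fun j _ => integral_const_mul _ _)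

lemma en_mono (p : Fin 3 → ℝ) (hp3 : ∀ j, p j < 1) {v : M → ℝ} (hv : Good p v)
    {t t₀ : ℝ} (ht : 0 < t) (htt : t ≤ t₀) :
    en p v t ≤ en p v t₀ := by
  have hd : ∀ s : ℝ, 0 < s → HasDerivAt (en p v) (∫ x in cube, F1 p v s x) s :=
    fun s hs => en_hasDerivAt p hv.smooth hs
  have hnn : ∀ s : ℝ, 0 < s → 0 ≤ ∫ x in cube, F1 p v s x := by
    intro s hs
    rw [en'_eq p hv hs]
    apply Finset.sum_nonneg
    intro j _
    have h1 : (0 : ℝ) ≤ 2 - 2 * p j := by have := hp3 j; linarith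
    have h2 : (0 : ℝ) ≤ s ^ (2 - 2 * p j - 1) := (Real.rpow_pos_of_pos hs _).le
    have h3 : 0 ≤ ∫ x in cube, (Dd (ex j) v (s, x)) ^ 2 :=
      setIntegral_nonneg measurableSet_cube (fun x _ => sq_nonneg _)
    exact mul_nonneg (mul_nonneg h1 h2) h3
  have hmono : MonotoneOn (en p v) (Icc t t₀) := by
    apply monotoneOn_of_deriv_nonneg (convex_Icc t t₀)
    · intro s hs
      exact ((hd s (lt_of_lt_of_le ht hs.1)).continuousAt).continuousWithinAt
    · intro s hs
      rw [interior_Icc] at hs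
      exact ((hd s (lt_trans ht hs.1)).differentiableAt).differentiableWithinAt
    · intro s hs
      rw [interior_Icc] at hs
      rw [(hd s (lt_trans ht hs.1)).deriv]
      exact hnn s (lt_trans ht hs.1)
  exact hmono (left_mem_Icc.2 htt) (right_mem_Icc.2 htt) htt

end KE

namespace KE

lemma smooth_iter {F : M → ℝ} (hF : ContDiffOn ℝ (⊤ : ℕ∞) F U) (i : Fin 3) (n : ℕ) :
    ContDiffOn ℝ (⊤ : ℕ∞) ((Dd (ex i))^[n] F) U := by
  induction n with
  | zero => exact hF
  | succ n ih => rw [Function.iterate_succ_apply']; exact smooth_Dd ih _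

lemma good_iter {p : Fin 3 → ℝ} {F : M → ℝ} (hF : Good p F) (i : Fin 3) (n : ℕ) :
    Good p ((Dd (ex i))^[n] F) := by
  induction n with
  | zero => exact hF
  | succ n ih => rw [Function.iterate_succ_apply']; exact good_Dd_ex ih i

/-- Iterated spatial derivatives in the joint-variable picture. -/
def Wfun (α : Fin 3 → ℕ) (F : M → ℝ) : M → ℝ :=
  (Dd (ex 0))^[α 0] ((Dd (ex 1))^[α 1] ((Dd (ex 2))^[α 2] F))

lemma good_W {p : Fin 3 → ℝ} {F : M → ℝ} (hF : Good p F) (α : Fin 3 → ℕ) :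
    Good p (Wfun α F) :=
  good_iter (good_iter (good_iter hF _ _) _ _) _ _

lemma pd_iter_slice {F : M → ℝ} (hF : ContDiffOn ℝ (⊤ : ℕ∞) F U) (i : Fin 3) (n : ℕ)
    {t : ℝ} (ht : 0 < t) :
    (pd i)^[n] (fun y : X => F (t, y)) = fun y : X => ((Dd (ex i))^[n] F) (t, y) := by
  induction n with
  | zero => rfl
  | succ n ih =>
    rw [Function.iterate_succ_apply', Function.iterate_succ_apply', ih]
    funext y
    exact pd_slice i (diffAt (smooth_iter hF i n) (by exact ht))

lemma pdMulti_slice {F : M → ℝ} (hF : ContDiffOn ℝ (⊤ : ℕ∞) F U) (α : Fin 3 → ℕ)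
    {t : ℝ} (ht : 0 < t) :
    pdMulti α (fun y : X => F (t, y)) = fun y : X => Wfun α F (t, y) := by
  unfold pdMulti Wfun
  rw [pd_iter_slice hF 2 (α 2) ht, pd_iter_slice (smooth_iter hF 2 (α 2)) 1 (α 1) ht,
    pd_iter_slice (smooth_iter (smooth_iter hF 2 (α 2)) 1 (α 1)) 0 (α 0) ht]

lemma dtd_slice {F : M → ℝ} (hF : ContDiffOn ℝ (⊤ : ℕ∞) F U) {t : ℝ} (ht : 0 < t) (x : X) :
    deriv (fun s => F (s, x)) t = Dd et F (t, x) :=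
  (hasDerivAt_slice_t (diffAt hF (by exact ht))).deriv

section main

variable (p : Fin 3 → ℝ) (ψ : ℝ → (Fin 3 → ℝ) → ℝ)

/-- The joint-variable version of `ψ`. -/
def Psi : M → ℝ := fun q => ψ q.1 q.2

lemma good_Psi (hsmooth : SmoothOnPos ψ) (hper : ∀ t : ℝ, 0 < t → ZPeriodic (ψ t))
    (hwave : Kasnerwave p ψ) : Good p (Psi ψ) := by
  have hsm : ContDiffOn ℝ (⊤ : ℕ∞) (Psi ψ) U := hsmooth
  refine ⟨hsm, ?_, ?_⟩
  · rintro ⟨t, x⟩ hq k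
    have h1 : (((t, x) : M) + tr k) = (t, x + fun i => (k i : ℝ)) := by
      simp [tr, Prod.ext_iff]
    rw [h1]
    exact hper t hq x k
  · rintro ⟨t, x⟩ hq
    have ht : (0 : ℝ) < t := hq
    have hdtd : ∀ s : ℝ, 0 < s → ∀ y : X, dtd ψ s y = Dd et (Psi ψ) (s, y) := by
      intro s hs y
      exact dtd_slice hsm hs y
    have h2 : dtd (dtd ψ) t x = Dd et (Dd et (Psi ψ)) (t, x) := by
      have hev : (fun s => dtd ψ s x) =ᶠ[𝓝 t] fun s => Dd et (Psi ψ) (s, x) := by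
        filter_upwards [Ioi_mem_nhds ht] with s hs using hdtd s hs x
      show deriv (fun s => dtd ψ s x) t = _
      rw [hev.deriv_eq]
      exact dtd_slice (smooth_Dd hsm et) ht x
    have h3 : ∀ j : Fin 3, pd j (pd j (ψ t)) x = Dd (ex j) (Dd (ex j) (Psi ψ)) (t, x) := by
      intro j
      have hψt : ψ t = fun y : X => Psi ψ (t, y) := rfl
      have h4 : pd j (ψ t) = fun y : X => Dd (ex j) (Psi ψ) (t, y) := by
        funext y
        rw [hψt]
        exact pd_slice j (diffAt hsm (by exact ht))
      rw [h4]
      exact pd_slice j (diffAt (smooth_Dd hsm (ex j)) (by exact ht))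
    have hw := hwave t ht x
    rw [h2, hdtd t ht x] at hw
    rw [show (((t, x) : M)).1 = t from rfl]
    rw [Finset.sum_congr rfl (fun j _ => by rw [← h3 j])]
    exact hw

lemma EKasner_eq_en (hsmooth : SmoothOnPos ψ) (α : Fin 3 → ℕ) {t : ℝ} (ht : 0 < t) :
    EKasner p ψ α t = (1 / 2) * en p (Wfun α (Psi ψ)) t := by
  have hsm : ContDiffOn ℝ (⊤ : ℕ∞) (Psi ψ) U := hsmooth
  have hW : ContDiffOn ℝ (⊤ : ℕ∞) (Wfun α (Psi ψ)) U :=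
    smooth_iter (smooth_iter (smooth_iter hsm 2 (α 2)) 1 (α 1)) 0 (α 0)
  unfold EKasner en
  congr 1
  refine setIntegral_congr_fun measurableSet_cube (fun x _ => ?_)
  beta_reduce
  have hslice : ∀ s : ℝ, 0 < s → pdMulti α (ψ s) = fun y : X => Wfun α (Psi ψ) (s, y) :=
    fun s hs => pdMulti_slice hsm α hs
  have h1 : dtd (fun s => pdMulti α (ψ s)) t x = Dd et (Wfun α (Psi ψ)) (t, x) := by
    have hev : (fun s => pdMulti α (ψ s) x) =ᶠ[𝓝 t] fun s => Wfun α (Psi ψ) (s, x) := by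
      filter_upwards [Ioi_mem_nhds ht] with s hs
      rw [hslice s hs]
    show deriv (fun s => pdMulti α (ψ s) x) t = _
    rw [hev.deriv_eq]
    exact dtd_slice hW ht x
  have h2 : ∀ i : Fin 3, pd i (pdMulti α (ψ t)) x = Dd (ex i) (Wfun α (Psi ψ)) (t, x) := by
    intro i
    rw [hslice t ht]
    exact pd_slice i (diffAt hW (by exact ht))
  unfold F0
  rw [h1]
  rw [Finset.sum_congr rfl (fun i _ => by rw [h2 i])]

end main

end KE


/-- **Proposition 3, energy estimate (Kasner).** The weighted energies are monotone:
`E_α(t) ≤ E_α(t₀)` for all `0 < t ≤ t₀` and every multi-index `α`. -/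
theorem kasner_energy_estimate
    (p : Fin 3 → ℝ) (hp1 : ∑ j : Fin 3, p j = 1) (hp2 : ∑ j : Fin 3, (p j) ^ 2 = 1)
    (hp3 : ∀ j : Fin 3, p j < 1)
    (t₀ : ℝ) (ht₀ : 0 < t₀)
    (ψ : ℝ → (Fin 3 → ℝ) → ℝ)
    (hsmooth : SmoothOnPos ψ)
    (hper : ∀ t : ℝ, 0 < t → ZPeriodic (ψ t))
    (hwave : Kasnerwave p ψ) :
    ∀ α : Fin 3 → ℕ, ∀ t ∈ Set.Ioc (0 : ℝ) t₀, EKasner p ψ α t ≤ EKasner p ψ α t₀ := by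
  intro α t ht
  have hgood : KE.Good p (KE.Psi ψ) := KE.good_Psi p ψ hsmooth hper hwave
  have hgoodW : KE.Good p (KE.Wfun α (KE.Psi ψ)) := KE.good_W hgood α
  rw [KE.EKasner_eq_en p ψ hsmooth α ht.1, KE.EKasner_eq_en p ψ hsmooth α ht₀]
  have := KE.en_mono p hp3 hgoodW ht.1 ht.2
  linarith
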